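/- For every w ∈ (−1,1) with w ≠ 0, the two middle branches of the piecewise formula for Φ agree at ξ = 1/(1+|w|): 1 + (6/π²)·[F(1/(1+|w|), w) − F(1/2, w) − 1] = (6/π²)·[G(1/(1+|w|), w) − G(1/(1−|w|), w)]. -/

import Mathlib

open Real Set Filter Topology

/-- The dilogarithm `Li₂(x) = ∑_{k≥1} x^k / k²`. -/
noncomputable def Li2 (x : ℝ) : ℝ := ∑' k : ℕ, x ^ (k + 1) / ((k : ℝ) + 1) ^ 2

noncomputable def Ψ (a : ℝ) : ℝ :=
  if a < 1 then
    -Li2 a + (1 - a) * Real.log (a⁻¹ - 1) + Real.log a - (1 / 2) * (Real.log a) ^ 2 + π ^ 2 / 6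
  else if a = 1 then 0
  else Li2 a⁻¹ - (a - 1) * Real.log (1 - a⁻¹) + Real.log a - π ^ 2 / 6

noncomputable def F (ξ w : ℝ) : ℝ :=
  Ψ (ξ * (1 + |w|)) + Ψ (ξ * (1 - |w|)) - 2 * Real.log ξ
    + 2 * (1 + |w| * Real.log ((1 - |w|) / (1 + |w|))) * ξ

noncomputable def G (ξ w : ℝ) : ℝ :=
  Ψ (ξ * (1 + |w|)) - Real.log ξ
    + (1 - |w| + 2 * |w| * Real.log ((2 * |w|) / (1 + |w|))) * ξ

lemma summable_aux : Summable (fun k : ℕ => 1 / ((k : ℝ) + 1) ^ 2) := by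
  have h : Summable (fun n : ℕ => (1 : ℝ) / (n : ℝ) ^ 2) :=
    Real.summable_one_div_nat_pow.mpr one_lt_two
  have := h.comp_injective (fun a b h => Nat.succ_injective h : Function.Injective Nat.succ)
  refine this.congr fun k => ?_
  simp [Function.comp, Nat.succ_eq_add_one]

lemma summable_li2 {x : ℝ} (h : |x| ≤ 1) :
    Summable (fun k : ℕ => x ^ (k + 1) / ((k : ℝ) + 1) ^ 2) := by
  refine Summable.of_norm_bounded summable_aux fun k => ?_
  have hk : (0:ℝ) < ((k : ℝ) + 1) ^ 2 := by positivity
  rw [norm_div, norm_pow, Real.norm_eq_abs, Real.norm_eq_abs, abs_of_pos hk]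
  gcongr
  exact pow_le_one₀ (abs_nonneg x) h

lemma li2_zero : Li2 0 = 0 := by
  have : ∀ k : ℕ, (0:ℝ) ^ (k + 1) / ((k : ℝ) + 1) ^ 2 = 0 := by intro k; simp
  simp [Li2, this]

lemma li2_one : Li2 1 = π ^ 2 / 6 := by
  have h := hasSum_zeta_two
  have h2 : HasSum (fun n : ℕ => (1:ℝ) / ((n : ℝ) + 1) ^ 2) (π ^ 2 / 6) := by
    have h2 := (hasSum_nat_add_iff' (f := fun n : ℕ => (1:ℝ) / (n : ℝ) ^ 2) 1).mpr h
    norm_num at h2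
    exact h2.congr_fun fun n => by ring_nf
  have : Li2 1 = ∑' k : ℕ, (1:ℝ) / ((k : ℝ) + 1) ^ 2 := by
    unfold Li2; congr 1; funext k; rw [one_pow]
  rw [this, h2.tsum_eq]

lemma li2_continuousOn : ContinuousOn Li2 (Icc (-1 : ℝ) 1) := by
  have h := tendstoUniformlyOn_tsum (f := fun (k : ℕ) (x : ℝ) => x ^ (k + 1) / ((k : ℝ) + 1) ^ 2)
    summable_aux (s := Icc (-1 : ℝ) 1) ?_
  · exact h.continuousOn (Frequently.of_forall fun t => continuousOn_finset_sum t
      fun k _ => (continuousOn_pow _).div_const _)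
  · intro k x hx
    have hk : (0:ℝ) < ((k : ℝ) + 1) ^ 2 := by positivity
    rw [norm_div, norm_pow, Real.norm_eq_abs, Real.norm_eq_abs, abs_of_pos hk]
    gcongr
    exact pow_le_one₀ (abs_nonneg x) (abs_le.mpr ⟨hx.1, hx.2⟩)

lemma li2_hasDerivAt {x : ℝ} (hx : x ∈ Ioo (0:ℝ) 1) :
    HasDerivAt Li2 (-Real.log (1 - x) / x) x := by
  obtain ⟨hx0, hx1⟩ := hx
  set r : ℝ := (1 + x) / 2 with hr
  have hr0 : 0 < r := by positivity
  have hr1 : r < 1 := by simp only [hr]; linarith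
  have hxr : x < r := by simp only [hr]; linarith
  have key : HasDerivAt Li2
      (∑' n : ℕ, ((n : ℝ) + 1) * x ^ n / ((n : ℝ) + 1) ^ 2) x := by
    refine hasDerivAt_tsum_of_isPreconnected (𝕜 := ℝ)
      (g := fun (n : ℕ) (y : ℝ) => y ^ (n + 1) / ((n : ℝ) + 1) ^ 2)
      (g' := fun (n : ℕ) (y : ℝ) => ((n : ℝ) + 1) * y ^ n / ((n : ℝ) + 1) ^ 2)
      (u := fun n : ℕ => r ^ n) (t := Ioo (-r) r) (y₀ := 0) (y := x)
      (summable_geometric_of_lt_one hr0.le hr1) isOpen_Ioo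
      (convex_Ioo _ _).isPreconnected ?_ ?_ ?_ ?_ ?_
    · intro n y _
      have := (hasDerivAt_pow (n + 1) y).div_const (((n : ℝ) + 1) ^ 2)
      refine this.congr_deriv ?_
      push_cast; ring
    · intro n y hy
      have hyr : |y| ≤ r := by
        rw [abs_le]; exact ⟨hy.1.le, hy.2.le⟩
      have h1 : |((n : ℝ) + 1) * y ^ n / ((n : ℝ) + 1) ^ 2| = |y| ^ n / ((n : ℝ) + 1) := by
        rw [abs_div, abs_mul, abs_pow, abs_of_pos (by positivity : (0:ℝ) < (n:ℝ)+1),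
          abs_of_pos (by positivity : (0:ℝ) < ((n:ℝ)+1)^2)]
        field_simp
      rw [Real.norm_eq_abs, h1]
      calc |y| ^ n / ((n : ℝ) + 1) ≤ |y| ^ n :=
            div_le_self (pow_nonneg (abs_nonneg y) n)
              (by linarith [Nat.cast_nonneg (α := ℝ) n])
        _ ≤ r ^ n := pow_le_pow_left₀ (abs_nonneg y) hyr n
    · exact ⟨by linarith, by linarith⟩  -- 0 ∈ Ioo (-r) r
    · exact summable_li2 (by simp : |(0:ℝ)| ≤ 1)
    · exact ⟨by linarith, hxr⟩
  have hsum : (∑' n : ℕ, ((n : ℝ) + 1) * x ^ n / ((n : ℝ) + 1) ^ 2)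
      = -Real.log (1 - x) / x := by
    have hlog := hasSum_pow_div_log_of_abs_lt_one
      (x := x) (by rw [abs_of_pos hx0]; exact hx1)
    have h2 := hlog.div_const x
    have h3 : HasSum (fun n : ℕ => ((n : ℝ) + 1) * x ^ n / ((n : ℝ) + 1) ^ 2)
        (-Real.log (1 - x) / x) := by
      refine h2.congr_fun fun n => ?_
      have hn : ((n : ℝ) + 1) ≠ 0 := by positivity
      rw [pow_succ]
      field_simp
      ring
    exact h3.tsum_eq
  rwa [hsum] at key

lemma refl_hasDerivAt {y : ℝ} (hy : y ∈ Ioo (0:ℝ) 1) :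
    HasDerivAt (fun z => Li2 z + Li2 (1 - z) + Real.log z * Real.log (1 - z)) 0 y := by
  obtain ⟨hy0, hy1⟩ := hy
  have h1y0 : 0 < 1 - y := by linarith
  have inner : HasDerivAt (fun z : ℝ => 1 - z) (-1) y := (hasDerivAt_id y).const_sub 1
  have h1 : HasDerivAt Li2 (-Real.log (1 - y) / y) y := li2_hasDerivAt ⟨hy0, hy1⟩
  have houter : HasDerivAt Li2 (-Real.log (1 - (1 - y)) / (1 - y)) (1 - y) :=
    li2_hasDerivAt ⟨by linarith, by linarith⟩
  have h2 : HasDerivAt (fun z => Li2 (1 - z)) (-Real.log (1 - (1 - y)) / (1 - y) * (-1)) y :=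
    houter.comp y inner
  have hl1 : HasDerivAt Real.log y⁻¹ y := Real.hasDerivAt_log (ne_of_gt hy0)
  have hl2 : HasDerivAt (fun z => Real.log (1 - z)) ((1 - y)⁻¹ * (-1)) y :=
    (Real.hasDerivAt_log (ne_of_gt h1y0)).comp y inner
  have h3 := hl1.mul hl2
  have H := (h1.add h2).add h3
  refine H.congr_deriv ?_
  rw [show (1:ℝ) - (1 - y) = y by ring]
  field_simp
  ring

lemma refl_const {a b : ℝ} (ha : a ∈ Ioo (0:ℝ) 1) (hb : b ∈ Ioo (0:ℝ) 1) :
    Li2 a + Li2 (1 - a) + Real.log a * Real.log (1 - a) =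
      Li2 b + Li2 (1 - b) + Real.log b * Real.log (1 - b) := by
  set h : ℝ → ℝ := fun z => Li2 z + Li2 (1 - z) + Real.log z * Real.log (1 - z) with hh
  suffices H : ∀ p q : ℝ, p ∈ Ioo (0:ℝ) 1 → q ∈ Ioo (0:ℝ) 1 → p < q → h p = h q by
    rcases lt_trichotomy a b with hab | hab | hab
    · exact H a b ha hb hab
    · rw [hab]
    · exact (H b a hb ha hab).symm
  intro p q hp hq hpq
  have hcont : ContinuousOn h (Icc p q) := fun z hz =>
    (refl_hasDerivAt ⟨lt_of_lt_of_le hp.1 hz.1, lt_of_le_of_lt hz.2 hq.2⟩).continuousAt.continuousWithinAt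
  have hderiv : ∀ z ∈ Ioo p q, HasDerivAt h 0 z := fun z hz =>
    refl_hasDerivAt ⟨hp.1.trans hz.1, hz.2.trans hq.2⟩
  obtain ⟨c, _, hc⟩ := exists_hasDerivAt_eq_slope h (fun _ => 0) hpq hcont hderiv
  have hne : q - p ≠ 0 := by linarith
  have := hc.symm
  rw [div_eq_iff hne] at this
  linarith [this]

lemma li2_reflection {x : ℝ} (hx : x ∈ Ioo (0:ℝ) 1) :
    Li2 x + Li2 (1 - x) + Real.log x * Real.log (1 - x) = π ^ 2 / 6 := by
  set h : ℝ → ℝ := fun z => Li2 z + Li2 (1 - z) + Real.log z * Real.log (1 - z) with hh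
  have hsub : Ioo (0:ℝ) 1 ⊆ Icc (-1 : ℝ) 1 := fun z hz => ⟨by linarith [hz.1], hz.2.le⟩
  have hle : 𝓝[Ioo (0:ℝ) 1] (0:ℝ) ≤ 𝓝[Icc (-1:ℝ) 1] (0:ℝ) := nhdsWithin_mono _ hsub
  have hnb : (𝓝[Ioo (0:ℝ) 1] (0:ℝ)).NeBot := by
    refine mem_closure_iff_nhdsWithin_neBot.mp ?_
    rw [closure_Ioo (zero_ne_one)]
    exact ⟨le_refl 0, by norm_num⟩
  -- T1
  have T1 : Tendsto Li2 (𝓝[Ioo (0:ℝ) 1] (0:ℝ)) (𝓝 0) := by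
    have := (li2_continuousOn 0 (by norm_num)).mono_left hle
    rwa [li2_zero] at this
  -- T2
  have T2 : Tendsto (fun z => Li2 (1 - z)) (𝓝[Ioo (0:ℝ) 1] (0:ℝ)) (𝓝 (π ^ 2 / 6)) := by
    have hc1 : ContinuousWithinAt Li2 (Icc (-1:ℝ) 1) 1 := li2_continuousOn 1 (by norm_num)
    have hmap : Tendsto (fun z : ℝ => 1 - z) (𝓝[Ioo (0:ℝ) 1] (0:ℝ)) (𝓝[Icc (-1:ℝ) 1] (1:ℝ)) := by
      refine tendsto_nhdsWithin_of_tendsto_nhds_of_eventually_within _ ?_ ?_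
      · have : Tendsto (fun z : ℝ => 1 - z) (𝓝 (0:ℝ)) (𝓝 (1 - 0)) :=
          (continuous_const.sub continuous_id).tendsto 0
        simpa using this.mono_left nhdsWithin_le_nhds
      · filter_upwards [self_mem_nhdsWithin] with z hz
        exact ⟨by linarith [hz.1, hz.2], by linarith [hz.1]⟩
    have := hc1.tendsto.comp hmap
    rwa [li2_one] at this
  -- T3
  have T3 : Tendsto (fun z => Real.log z * Real.log (1 - z)) (𝓝[Ioo (0:ℝ) 1] (0:ℝ)) (𝓝 0) := by
    have hg : Tendsto (fun z : ℝ => 2 * (-(Real.log z * z))) (𝓝[Ioo (0:ℝ) 1] (0:ℝ)) (𝓝 0) := by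
      have h0 := tendsto_log_mul_rpow_nhdsGT_zero (r := 1) one_pos
      simp only [Real.rpow_one] at h0
      have := (h0.neg).const_mul 2
      simp only [neg_zero, mul_zero] at this
      exact this.mono_left (nhdsWithin_mono _ (fun z hz => hz.1))
    refine tendsto_of_tendsto_of_tendsto_of_le_of_le' tendsto_const_nhds hg ?_ ?_
    · filter_upwards [self_mem_nhdsWithin] with z hz
      have a1 : Real.log z ≤ 0 := Real.log_nonpos hz.1.le hz.2.le
      have a2 : Real.log (1 - z) ≤ 0 :=
        Real.log_nonpos (by linarith [hz.2]) (by linarith [hz.1])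
      nlinarith [a1, a2]
    · have hmem : Ioo (0:ℝ) (1/2) ∈ 𝓝[Ioo (0:ℝ) 1] (0:ℝ) := by
        refine mem_nhdsWithin.mpr ⟨Ioo (-(1/2)) (1/2), isOpen_Ioo, by norm_num, ?_⟩
        rintro z ⟨⟨_, hz2⟩, hz3, _⟩
        exact ⟨hz3, hz2⟩
      filter_upwards [hmem] with z hz
      obtain ⟨hz0, hz2⟩ := hz
      have h1z : 0 < 1 - z := by linarith
      have hlx : Real.log z ≤ 0 := Real.log_nonpos hz0.le (by linarith)
      have hl1 : -Real.log (1 - z) ≤ 2 * z := by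
        have h := Real.log_le_sub_one_of_pos (inv_pos.mpr h1z)
        rw [Real.log_inv] at h
        have h2 : (1 - z)⁻¹ - 1 ≤ 2 * z := by
          rw [show (1-z)⁻¹ - 1 = z / (1-z) by field_simp; ring, div_le_iff₀ h1z]
          nlinarith
        linarith
      have key := mul_le_mul_of_nonneg_left hl1 (neg_nonneg.mpr hlx)
      nlinarith [key]
  have Tlim : Tendsto h (𝓝[Ioo (0:ℝ) 1] (0:ℝ)) (𝓝 (π ^ 2 / 6)) := by
    have := (T1.add T2).add T3
    simpa using this
  have Tconst : Tendsto h (𝓝[Ioo (0:ℝ) 1] (0:ℝ)) (𝓝 (h x)) := by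
    refine Tendsto.congr' ?_ tendsto_const_nhds
    filter_upwards [self_mem_nhdsWithin] with z hz
    exact (refl_const hx hz : h x = h z)
  exact (tendsto_nhds_unique Tconst Tlim)

lemma Psi_lt {a : ℝ} (h : a < 1) : Ψ a =
    -Li2 a + (1 - a) * Real.log (a⁻¹ - 1) + Real.log a - (1 / 2) * (Real.log a) ^ 2 + π ^ 2 / 6 :=
  if_pos h

lemma Psi_one : Ψ 1 = 0 := by simp [Ψ]

lemma Psi_gt {a : ℝ} (h : 1 < a) : Ψ a =
    Li2 a⁻¹ - (a - 1) * Real.log (1 - a⁻¹) + Real.log a - π ^ 2 / 6 := by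
  rw [Ψ, if_neg (by linarith), if_neg (by linarith)]

/-- The two middle branches of the piecewise formula for `Φ` agree at
`ξ = 1/(1+|w|)`. -/
theorem stmt10 (w : ℝ) (hw : w ∈ Ioo (-1 : ℝ) 1) (hw0 : w ≠ 0) :
    1 + 6 / π ^ 2 * (F (1 / (1 + |w|)) w - F (1 / 2) w - 1) =
      6 / π ^ 2 * (G (1 / (1 + |w|)) w - G (1 / (1 - |w|)) w) := by
  set s : ℝ := |w| with hs
  have hs0 : 0 < s := abs_pos.mpr hw0
  have hs1 : s < 1 := abs_lt.mpr ⟨hw.1, hw.2⟩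
  have h1p : (0:ℝ) < 1 + s := by linarith
  have h1m : (0:ℝ) < 1 - s := by linarith
  have hp1 : (1:ℝ) + s ≠ 0 := ne_of_gt h1p
  have hm1 : (1:ℝ) - s ≠ 0 := ne_of_gt h1m
  have hsne : s ≠ 0 := ne_of_gt hs0
  have key : F (1/(1+s)) w - F (1/2) w - 1 - (G (1/(1+s)) w - G (1/(1-s)) w)
      = -(π^2/6) := by
    have hrefl := li2_reflection (x := (1+s)/2) ⟨by linarith, by linarith⟩
    rw [show (1:ℝ) - (1+s)/2 = (1-s)/2 by ring] at hrefl
    have hq : Li2 ((1-s)/2) =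
        π^2/6 - Real.log ((1+s)/2) * Real.log ((1-s)/2) - Li2 ((1+s)/2) := by linarith
    simp only [F, G, ← hs]
    rw [show 1/(1+s) * (1+s) = 1 by field_simp,
        show 1/(1+s) * (1-s) = (1-s)/(1+s) by rw [div_mul_eq_mul_div, one_mul],
        show (1/2 : ℝ) * (1+s) = (1+s)/2 by ring,
        show (1/2 : ℝ) * (1-s) = (1-s)/2 by ring,
        show 1/(1-s) * (1+s) = (1+s)/(1-s) by rw [div_mul_eq_mul_div, one_mul]]
    rw [Psi_one,
        Psi_lt (show (1-s)/(1+s) < 1 by rw [div_lt_one h1p]; linarith),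
        Psi_lt (show (1+s)/2 < 1 by linarith),
        Psi_lt (show (1-s)/2 < 1 by linarith),
        Psi_gt (show (1:ℝ) < (1+s)/(1-s) by rw [lt_div_iff₀ h1m]; linarith)]
    rw [show ((1-s)/(1+s))⁻¹ - 1 = 2*s/(1-s) by rw [inv_div]; field_simp; ring,
        show (((1+s):ℝ)/2)⁻¹ - 1 = (1-s)/(1+s) by rw [inv_div]; field_simp; ring,
        show (((1-s):ℝ)/2)⁻¹ - 1 = (1+s)/(1-s) by rw [inv_div]; field_simp; ring,
        show ((1+s)/(1-s))⁻¹ = (1-s)/(1+s) from inv_div _ _,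
        show 1 - (1-s)/(1+s) = 2*s/(1+s) by field_simp; ring]
    rw [hq]
    have ha : Real.log ((1-s)/(1+s)) = Real.log (1-s) - Real.log (1+s) :=
      Real.log_div hm1 hp1
    have hb : Real.log (2*s/(1-s)) = Real.log 2 + Real.log s - Real.log (1-s) := by
      rw [Real.log_div (by positivity) hm1, Real.log_mul two_ne_zero hsne]
    have hc : Real.log (2*s/(1+s)) = Real.log 2 + Real.log s - Real.log (1+s) := by
      rw [Real.log_div (by positivity) hp1, Real.log_mul two_ne_zero hsne]
    have hd : Real.log ((1+s)/2) = Real.log (1+s) - Real.log 2 :=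
      Real.log_div hp1 two_ne_zero
    have he : Real.log ((1-s)/2) = Real.log (1-s) - Real.log 2 :=
      Real.log_div hm1 two_ne_zero
    have hf : Real.log ((1+s)/(1-s)) = Real.log (1+s) - Real.log (1-s) :=
      Real.log_div hp1 hm1
    have hg2 : Real.log (1/(1+s)) = -Real.log (1+s) := by rw [one_div, Real.log_inv]
    have hh2 : Real.log (1/(1-s)) = -Real.log (1-s) := by rw [one_div, Real.log_inv]
    have hi2 : Real.log (1/2 : ℝ) = -Real.log 2 := by rw [one_div, Real.log_inv]
    rw [ha, hb, hc, hd, he, hf, hg2, hh2, hi2]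
    field_simp
    ring
  have hπ : π ≠ 0 := Real.pi_ne_zero
  have hπ2 : π^2 ≠ 0 := pow_ne_zero 2 hπ
  field_simp
  linear_combination 6 * key
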